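/- Let F_X, F_Y be CDFs that are single-crossing from below: there exists x_1 such that F_X(x) ≤ F_Y(x) for x < x_1 and F_X(x) ≥ F_Y(x) for x > x_1. Let H be a differentiable distortion function with H' > 0. Then ∫_0^u Q_X(t) dH(t) ≥ ∫_0^u Q_Y(t) dH(t) for all u ∈ [0,1] if and only if ∫_0^1 Q_X(t) dH(t) ≥ ∫_0^1 Q_Y(t) dH(t). -/
import Mathlib


open Set intervalIntegral MeasureTheory

/-- The right-continuous generalized inverse `f⁻¹(p) = sup {z | f z ≤ p}`. -/
noncomputable def rcInv (f : ℝ → ℝ) (p : ℝ) : ℝ := sSup {z : ℝ | f z ≤ p}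

private lemma set_nonempty {F : ℝ → ℝ} (hF0 : Filter.Tendsto F Filter.atBot (nhds 0))
    {t : ℝ} (ht : 0 < t) : {z : ℝ | F z ≤ t}.Nonempty := by
  have : ∀ᶠ z in Filter.atBot, F z < t := hF0.eventually_lt_const ht
  rcases this.exists with ⟨z, hz⟩
  exact ⟨z, hz.le⟩

private lemma set_bddAbove {F : ℝ → ℝ} (hFmono : Monotone F)
    (hF1 : Filter.Tendsto F Filter.atTop (nhds 1))
    {t : ℝ} (ht : t < 1) : BddAbove {z : ℝ | F z ≤ t} := by
  have : ∀ᶠ z in Filter.atTop, t < F z := hF1.eventually_const_lt ht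
  rcases this.exists with ⟨z₀, hz₀⟩
  refine ⟨z₀, fun z hz => ?_⟩
  by_contra hlt
  push_neg at hlt
  exact absurd (le_trans (hFmono hlt.le) hz) (not_le.mpr hz₀)

/-- Auxiliary: a.e.-on-Icc comparison from pointwise on Ioo. -/
private lemma mono_Ioo_integral {f g : ℝ → ℝ} {a b : ℝ} (hab : a ≤ b)
    (hf : IntervalIntegrable f volume a b) (hg : IntervalIntegrable g volume a b)
    (h : ∀ t ∈ Ioo a b, f t ≤ g t) :
    ∫ t in a..b, f t ≤ ∫ t in a..b, g t := by
  apply intervalIntegral.integral_mono_ae_restrict hab hf hg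
  rw [show (volume : Measure ℝ).restrict (Icc a b) = volume.restrict (Ioo a b) from
    (Measure.restrict_congr_set Ioo_ae_eq_Icc).symm]
  filter_upwards [ae_restrict_mem measurableSet_Ioo] with t ht using h t ht

/-- For single-crossing (from below) CDFs, `H`-distorted stochastic dominance is
equivalent to comparison of the total distorted expectations. -/
theorem stmt_7 (FX FY : ℝ → ℝ)
    (hFXmono : Monotone FX) (hFYmono : Monotone FY)
    (hFX0 : Filter.Tendsto FX Filter.atBot (nhds 0))
    (hFX1 : Filter.Tendsto FX Filter.atTop (nhds 1))
    (hFY0 : Filter.Tendsto FY Filter.atBot (nhds 0))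
    (hFY1 : Filter.Tendsto FY Filter.atTop (nhds 1))
    (x₁ : ℝ)
    (hcross₁ : ∀ x < x₁, FX x ≤ FY x) (hcross₂ : ∀ x, x₁ < x → FY x ≤ FX x)
    (H : ℝ → ℝ) (hHdiff : Differentiable ℝ H)
    (hH0 : H 0 = 0) (hH1 : H 1 = 1) (hH' : ∀ t ∈ Icc (0:ℝ) 1, 0 < deriv H t)
    (hQXint : IntervalIntegrable (fun t => rcInv FX t * deriv H t) MeasureTheory.volume 0 1)
    (hQYint : IntervalIntegrable (fun t => rcInv FY t * deriv H t) MeasureTheory.volume 0 1) :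
    (∀ u ∈ Icc (0:ℝ) 1,
        ∫ t in (0:ℝ)..u, rcInv FX t * deriv H t ≥ ∫ t in (0:ℝ)..u, rcInv FY t * deriv H t)
      ↔ ∫ t in (0:ℝ)..1, rcInv FX t * deriv H t ≥ ∫ t in (0:ℝ)..1, rcInv FY t * deriv H t := by
  constructor
  · intro h
    exact h 1 ⟨zero_le_one, le_refl 1⟩
  · intro htot u hu
    obtain ⟨hu0, hu1⟩ := hu
    set t₁ : ℝ := FY x₁ with ht₁def
    -- FY values lie in [0,1]
    have hFY_nonneg : ∀ z, 0 ≤ FY z := fun z =>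
      le_of_tendsto hFY0 (Filter.eventually_atBot.mpr ⟨z, fun y hy => hFYmono hy⟩)
    have hFY_le_one : ∀ z, FY z ≤ 1 := fun z =>
      ge_of_tendsto hFY1 (Filter.eventually_atTop.mpr ⟨z, fun y hy => hFYmono hy⟩)
    have ht₁0 : 0 ≤ t₁ := hFY_nonneg x₁
    have ht₁1 : t₁ ≤ 1 := hFY_le_one x₁
    -- Quantile comparison below the crossing point
    have hlow : ∀ t, 0 < t → t < 1 → t < t₁ → rcInv FY t ≤ rcInv FX t := by
      intro t ht0 ht1 htt₁
      apply csSup_le_csSup (set_bddAbove hFXmono hFX1 ht1) (set_nonempty hFY0 ht0)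
      intro z hz
      have hz' : FY z ≤ t := hz
      have hzx₁ : z < x₁ := by
        by_contra hge
        push_neg at hge
        exact absurd (le_trans (hFYmono hge) hz') (not_le.mpr htt₁)
      exact le_trans (hcross₁ z hzx₁) hz'
    -- Quantile comparison above the crossing point
    have hhigh : ∀ t, 0 < t → t < 1 → t₁ ≤ t → rcInv FX t ≤ rcInv FY t := by
      intro t ht0 ht1 htt₁
      have hbY : BddAbove {z : ℝ | FY z ≤ t} := set_bddAbove hFYmono hFY1 ht1
      apply csSup_le (set_nonempty hFX0 ht0)
      intro z hz
      have hz' : FX z ≤ t := hz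
      rcases le_or_gt z x₁ with hle | hgt
      · exact le_trans hle (le_csSup hbY htt₁)
      · exact le_csSup hbY (le_trans (hcross₂ z hgt) hz')
    -- positivity of H' on subintervals
    have hH'pos : ∀ t ∈ Ioo (0:ℝ) 1, 0 < deriv H t := fun t ht =>
      hH' t ⟨ht.1.le, ht.2.le⟩
    rcases le_or_gt u t₁ with hcase | hcase
    · -- u ≤ t₁ : integrand comparison on (0,u)
      have hQXu := hQXint.mono_set (by
        rw [uIcc_of_le hu0, uIcc_of_le zero_le_one]; exact Icc_subset_Icc le_rfl hu1)
      have hQYu := hQYint.mono_set (by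
        rw [uIcc_of_le hu0, uIcc_of_le zero_le_one]; exact Icc_subset_Icc le_rfl hu1)
      refine mono_Ioo_integral hu0 hQYu hQXu (fun t ht => ?_)
      have ht0 : 0 < t := ht.1
      have ht1 : t < 1 := lt_of_lt_of_le ht.2 hu1
      have htt₁ : t < t₁ := lt_of_lt_of_le ht.2 hcase
      have := hlow t ht0 ht1 htt₁
      have hpos := hH'pos t ⟨ht0, ht1⟩
      exact mul_le_mul_of_nonneg_right this hpos.le
    · -- t₁ < u : use total and nonpositivity on (u,1)
      have hQXu1 := hQXint.mono_set (by
        rw [uIcc_of_le hu1, uIcc_of_le zero_le_one]; exact Icc_subset_Icc hu0 le_rfl)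
      have hQYu1 := hQYint.mono_set (by
        rw [uIcc_of_le hu1, uIcc_of_le zero_le_one]; exact Icc_subset_Icc hu0 le_rfl)
      have hQX0u := hQXint.mono_set (by
        rw [uIcc_of_le hu0, uIcc_of_le zero_le_one]; exact Icc_subset_Icc le_rfl hu1)
      have hQY0u := hQYint.mono_set (by
        rw [uIcc_of_le hu0, uIcc_of_le zero_le_one]; exact Icc_subset_Icc le_rfl hu1)
      have hsplitX := intervalIntegral.integral_add_adjacent_intervals hQX0u hQXu1
      have hsplitY := intervalIntegral.integral_add_adjacent_intervals hQY0u hQYu1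
      -- on (u,1), rcInv FX ≤ rcInv FY
      have htail : ∫ t in u..1, rcInv FX t * deriv H t ≤
          ∫ t in u..1, rcInv FY t * deriv H t := by
        refine mono_Ioo_integral hu1 hQXu1 hQYu1 (fun t ht => ?_)
        have ht0 : 0 < t := lt_of_le_of_lt (le_trans ht₁0 hcase.le) ht.1
        have ht1 : t < 1 := ht.2
        have htt₁ : t₁ ≤ t := le_trans hcase.le ht.1.le
        have := hhigh t ht0 ht1 htt₁
        have hpos := hH'pos t ⟨ht0, ht1⟩
        exact mul_le_mul_of_nonneg_right this hpos.le
      have : ∫ t in (0:ℝ)..u, rcInv FY t * deriv H t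
          = (∫ t in (0:ℝ)..1, rcInv FY t * deriv H t) - ∫ t in u..1, rcInv FY t * deriv H t := by
        rw [← hsplitY]; ring
      rw [this]
      have hX : ∫ t in (0:ℝ)..u, rcInv FX t * deriv H t
          = (∫ t in (0:ℝ)..1, rcInv FX t * deriv H t) - ∫ t in u..1, rcInv FX t * deriv H t := by
        rw [← hsplitX]; ring
      rw [hX]
      exact sub_le_sub htot htail
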